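/- Let d ≥ 2 be an integer, let v₁, v₂ ∈ ℝ^d with r := |v₁ − v₂| > 0, and define J : ℝ^d → ℝ^d by J(ω) = r^{-1}((v₁ − v₂) + 2⟨ω, v₂ − v₁⟩ω), so that J(ω) = r^{-1}(v₁' − v₂') with (v₁', v₂') = T_ω(v₁, v₂). Let S⁺ = {ω ∈ 𝕊₁^{d-1} : ⟨ω, v₂ − v₁⟩ > 0}. Then J restricted to S⁺ is a bijection from S⁺ onto 𝕊₁^{d-1} \ {r^{-1}(v₁ − v₂)}. -/

import Mathlib

open MeasureTheory

/-- The binary transition map `J(ω) = r⁻¹ (v₁' − v₂') = r⁻¹ ((v₁ − v₂) + 2⟨ω, v₂ − v₁⟩ ω)`,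
where `r = |v₁ − v₂|`. -/
noncomputable def transJ {d : ℕ} (v₁ v₂ : EuclideanSpace ℝ (Fin d)) :
    EuclideanSpace ℝ (Fin d) → EuclideanSpace ℝ (Fin d) :=
  fun ω => ‖v₁ - v₂‖⁻¹ • ((v₁ - v₂) + (2 * (inner ℝ ω (v₂ - v₁) : ℝ)) • ω)

section aux

variable {E : Type*} [NormedAddCommGroup E] [InnerProductSpace ℝ E]

lemma refl_norm (e ω : E) (he : ‖e‖ = 1) (hω : ‖ω‖ = 1) :
    ‖e - (2 * (inner ℝ ω e : ℝ)) • ω‖ = 1 := by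
  have h : ‖e - (2 * (inner ℝ ω e : ℝ)) • ω‖ ^ 2 = 1 := by
    rw [← real_inner_self_eq_norm_sq]
    simp only [inner_sub_left, inner_sub_right, real_inner_smul_left, real_inner_smul_right,
      real_inner_self_eq_norm_sq, he, hω]
    rw [real_inner_comm ω e, norm_smul, Real.norm_eq_abs, hω, mul_one, sq_abs]
    ring
  nlinarith [norm_nonneg (e - (2 * (inner ℝ ω e : ℝ)) • ω)]

lemma key (e : E) (he : ‖e‖ = 1) :
    Set.BijOn (fun ω => e - (2 * (inner ℝ ω e : ℝ)) • ω)
      {ω : E | ‖ω‖ = 1 ∧ (inner ℝ ω e : ℝ) < 0}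
      ({σ : E | ‖σ‖ = 1} \ {e}) := by
  refine ⟨?_, ?_, ?_⟩
  · rintro ω ⟨hω, hc⟩
    refine ⟨refl_norm e ω he hω, ?_⟩
    simp only [Set.mem_singleton_iff]
    intro h
    have h2 : (2 * (inner ℝ ω e : ℝ)) • ω = 0 := by
      have := sub_eq_self.mp h
      exact this
    rcases smul_eq_zero.mp h2 with h | h
    · linarith
    · rw [h] at hω; simp at hω
  · rintro ω ⟨hω, hc⟩ ω' ⟨hω', hc'⟩ heq
    simp only at heq
    have h : (2 * (inner ℝ ω e : ℝ)) • ω = (2 * (inner ℝ ω' e : ℝ)) • ω' := by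
      have := sub_right_injective heq
      exact this
    have hn : |2 * (inner ℝ ω e : ℝ)| = |2 * (inner ℝ ω' e : ℝ)| := by
      have := congrArg norm h
      rwa [norm_smul, norm_smul, hω, hω', mul_one, mul_one, Real.norm_eq_abs,
        Real.norm_eq_abs] at this
    have hcc : (2 * (inner ℝ ω e : ℝ)) = 2 * (inner ℝ ω' e : ℝ) := by
      rw [abs_of_neg (by linarith), abs_of_neg (by linarith)] at hn
      linarith
    rw [hcc] at h
    exact smul_right_injective E (by intro h0; rw [h0] at hcc; linarith) h
  · rintro σ ⟨hσ, hσe⟩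
    simp only [Set.mem_singleton_iff] at hσe
    have hσ1 : ‖σ‖ = 1 := hσ
    have hse : σ - e ≠ 0 := sub_ne_zero.mpr hσe
    set t : ℝ := ‖σ - e‖ with ht
    have ht0 : 0 < t := norm_pos_iff.mpr hse
    set ω : E := t⁻¹ • (σ - e) with hω
    have hωn : ‖ω‖ = 1 := by
      rw [hω, norm_smul, Real.norm_eq_abs, abs_of_pos (inv_pos.mpr ht0), inv_mul_cancel₀ ht0.ne']
    have hin : (inner ℝ σ e : ℝ) < 1 :=
      (inner_lt_one_iff_real_of_norm_eq_one hσ1 he).mpr hσe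
    have ht2 : t ^ 2 = 2 - 2 * (inner ℝ σ e : ℝ) := by
      rw [ht, norm_sub_sq_real, hσ1, he]; ring
    have hωe : (inner ℝ ω e : ℝ) = t⁻¹ * ((inner ℝ σ e : ℝ) - 1) := by
      rw [hω, real_inner_smul_left, inner_sub_left, real_inner_self_eq_norm_sq, he]
      ring
    refine ⟨ω, ⟨hωn, ?_⟩, ?_⟩
    · rw [hωe]
      have : (inner ℝ σ e : ℝ) - 1 < 0 := by linarith
      exact mul_neg_of_pos_of_neg (inv_pos.mpr ht0) this
    · simp only
      have hcoeff : 2 * (inner ℝ ω e : ℝ) * t⁻¹ = -1 := by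
        rw [hωe]
        have : 2 * ((inner ℝ σ e : ℝ) - 1) = -(t ^ 2) := by linarith
        field_simp
        nlinarith
      have : (2 * (inner ℝ ω e : ℝ)) • ω = e - σ := by
        rw [hω, smul_smul, hcoeff, neg_one_smul, neg_sub]
      rw [this]
      abel

end aux

theorem stmt_17 (d : ℕ) (hd : 2 ≤ d) (v₁ v₂ : EuclideanSpace ℝ (Fin d)) (hne : v₁ ≠ v₂) :
    Set.BijOn (transJ v₁ v₂)
      {ω : EuclideanSpace ℝ (Fin d) |
        ω ∈ Metric.sphere (0 : EuclideanSpace ℝ (Fin d)) 1 ∧ 0 < (inner ℝ ω (v₂ - v₁) : ℝ)}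
      (Metric.sphere (0 : EuclideanSpace ℝ (Fin d)) 1 \ {‖v₁ - v₂‖⁻¹ • (v₁ - v₂)}) := by
  set u := v₁ - v₂ with hu
  have hu0 : u ≠ 0 := sub_ne_zero.mpr hne
  have hr : (0:ℝ) < ‖u‖ := norm_pos_iff.mpr hu0
  set e : EuclideanSpace ℝ (Fin d) := ‖u‖⁻¹ • u with hedef
  have he : ‖e‖ = 1 := by
    rw [hedef, norm_smul, Real.norm_eq_abs, abs_of_pos (inv_pos.mpr hr), inv_mul_cancel₀ hr.ne']
  have hfun : transJ v₁ v₂ = fun ω => e - (2 * (inner ℝ ω e : ℝ)) • ω := by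
    funext ω
    rw [transJ, hedef]
    have h1 : (inner ℝ ω (v₂ - v₁) : ℝ) = -(inner ℝ ω u : ℝ) := by
      rw [hu, show v₂ - v₁ = -(v₁ - v₂) by abel, inner_neg_right]
    have h2 : (inner ℝ ω (‖u‖⁻¹ • u) : ℝ) = ‖u‖⁻¹ * (inner ℝ ω u : ℝ) :=
      real_inner_smul_right ω u _
    rw [h1, h2, smul_add, smul_smul, ← hu]
    rw [sub_eq_add_neg, ← neg_smul]
    congr 1
    ring
  have hset1 : {ω : EuclideanSpace ℝ (Fin d) |
      ω ∈ Metric.sphere (0 : EuclideanSpace ℝ (Fin d)) 1 ∧ 0 < (inner ℝ ω (v₂ - v₁) : ℝ)} =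
      {ω : EuclideanSpace ℝ (Fin d) | ‖ω‖ = 1 ∧ (inner ℝ ω e : ℝ) < 0} := by
    ext ω
    simp only [Set.mem_setOf_eq, mem_sphere_zero_iff_norm]
    constructor
    · rintro ⟨h1, h2⟩
      refine ⟨h1, ?_⟩
      rw [hedef, real_inner_smul_right]
      have : (inner ℝ ω u : ℝ) = -(inner ℝ ω (v₂ - v₁) : ℝ) := by
        rw [hu, show v₂ - v₁ = -(v₁ - v₂) by abel, inner_neg_right]; ring
      rw [this]
      exact mul_neg_of_pos_of_neg (inv_pos.mpr hr) (by linarith)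
    · rintro ⟨h1, h2⟩
      refine ⟨h1, ?_⟩
      rw [hedef, real_inner_smul_right] at h2
      have h3 : (inner ℝ ω u : ℝ) < 0 := by
        by_contra h
        push_neg at h
        nlinarith [inv_pos.mpr hr]
      have : (inner ℝ ω (v₂ - v₁) : ℝ) = -(inner ℝ ω u : ℝ) := by
        rw [hu, show v₂ - v₁ = -(v₁ - v₂) by abel, inner_neg_right]
      rw [this]; linarith
  have hset2 : (Metric.sphere (0 : EuclideanSpace ℝ (Fin d)) 1 \ {‖v₁ - v₂‖⁻¹ • (v₁ - v₂)}) =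
      ({σ : EuclideanSpace ℝ (Fin d) | ‖σ‖ = 1} \ {e}) := by
    ext σ
    simp [mem_sphere_zero_iff_norm, hedef, hu]
  rw [hfun, hset1, hset2]
  exact key e he
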